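/- Let f : closed unit disc → ℂ be continuous, holomorphic on the open disc, with finitely many zeros ζ_1,…,ζ_N (with multiplicities m_k) in the open disc, none at 0, and |f| ≤ M on the unit circle. Then |f(0)| ≤ M · Π_k |ζ_k|^{m_k}. -/

import Mathlib

open Metric Complex

/-- if `f` is continuous on the closed unit disc, holomorphic inside, with
zeros exactly `ζ_1,…,ζ_N` (with multiplicities `m_k`) in the open disc, none at `0`, and
`|f| ≤ M` on the unit circle, then `|f 0| ≤ M ⋅ Π_k |ζ_k|^{m_k}`. -/
theorem stmt6 (N : ℕ) (ζ : Fin N → ℂ)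
    (hζ : ∀ k, ζ k ∈ ball (0:ℂ) 1) (hζ0 : ∀ k, ζ k ≠ 0)
    (m : Fin N → ℕ) (hm : ∀ k, 0 < m k)
    (f g : ℂ → ℂ)
    (hfc : ContinuousOn f (closedBall (0:ℂ) 1)) (hfd : DifferentiableOn ℂ f (ball (0:ℂ) 1))
    (hgc : ContinuousOn g (closedBall (0:ℂ) 1)) (hgd : DifferentiableOn ℂ g (ball (0:ℂ) 1))
    (hgne : ∀ w ∈ ball (0:ℂ) 1, g w ≠ 0)
    (hfact : ∀ w ∈ closedBall (0:ℂ) 1, f w = (∏ k, (w - ζ k) ^ (m k)) * g w)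
    (M : ℝ) (hM : ∀ w : ℂ, ‖w‖ = 1 → ‖f w‖ ≤ M) :
    ‖f 0‖ ≤ M * ∏ k, ‖ζ k‖ ^ (m k) := by
  set h : ℂ → ℂ := fun w => (∏ k, (1 - (starRingEnd ℂ) (ζ k) * w) ^ (m k)) * g w with hh
  have hpc : Continuous fun w : ℂ => ∏ k, (1 - (starRingEnd ℂ) (ζ k) * w) ^ (m k) := by
    continuity
  have hpd : Differentiable ℂ fun w : ℂ => ∏ k, (1 - (starRingEnd ℂ) (ζ k) * w) ^ (m k) := by
    apply Differentiable.fun_finsetProd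
    intro k _
    exact ((differentiable_const _).sub ((differentiable_const _).mul differentiable_id)).pow _
  -- max modulus for h
  have hg0 : ‖g 0‖ ≤ M := by
    have key : ‖h 0‖ ≤ M := by
      apply Complex.norm_le_of_forall_mem_frontier_norm_le
        (isBounded_ball (x := (0:ℂ)) (r := 1))
      · exact ⟨fun w hw => (hpd w).differentiableWithinAt.mul (hgd w hw),
          by
            rw [closure_ball (0:ℂ) one_ne_zero]
            exact (hpc.continuousOn).mul hgc⟩
      · intro z hz
        rw [frontier_ball (0:ℂ) one_ne_zero] at hz
        have hz1 : ‖z‖ = 1 := by simpa using hz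
        have hnorm : ∀ k, ‖1 - (starRingEnd ℂ) (ζ k) * z‖ = ‖z - ζ k‖ := by
          intro k
          have hns : Complex.normSq z = 1 := by
            rw [Complex.normSq_eq_norm_sq]; simp [hz1]
          have hzz : (starRingEnd ℂ) z * z = 1 := by
            rw [mul_comm, Complex.mul_conj, hns]; norm_num
          calc ‖1 - (starRingEnd ℂ) (ζ k) * z‖
              = ‖(starRingEnd ℂ) (1 - (starRingEnd ℂ) (ζ k) * z)‖ := by
                rw [RingHomIsometric.norm_map]
            _ = ‖(starRingEnd ℂ) z * (z - ζ k)‖ := by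
                congr 1
                have : (starRingEnd ℂ) (1 - (starRingEnd ℂ) (ζ k) * z)
                    = 1 - ζ k * (starRingEnd ℂ) z := by
                  simp [map_sub, map_mul]
                rw [this, mul_sub, hzz]
                ring
            _ = ‖z - ζ k‖ := by
                rw [norm_mul]
                simp [hz1]
        have : ‖h z‖ = ‖f z‖ := by
          rw [hh]
          simp only
          rw [hfact z (by simp [mem_closedBall, dist_eq_norm, hz1])]
          rw [norm_mul, norm_mul, norm_prod, norm_prod]
          simp only [norm_pow]
          exact congrArg (· * ‖g z‖) (Finset.prod_congr rfl fun k _ => by rw [hnorm k])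
        rw [this]
        exact hM z hz1
      · rw [closure_ball (0:ℂ) one_ne_zero]; exact mem_closedBall_self zero_le_one
    simpa [hh] using key
  have hf0 : ‖f 0‖ = (∏ k, ‖ζ k‖ ^ (m k)) * ‖g 0‖ := by
    rw [hfact 0 (mem_closedBall_self zero_le_one), norm_mul, norm_prod]
    simp [norm_pow]
  rw [hf0, mul_comm M]
  exact mul_le_mul_of_nonneg_left hg0 (Finset.prod_nonneg fun k _ => by positivity)
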